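/- Let {b^z : z ∈ Ω} be a holomorphic family of classical scalar Shubin symbols with order function τ. Then the map z ↦ TR(b^z) is holomorphic on Ω ∖ {z ∈ Ω : τ(z) = −2n + j for some j ∈ ℕ₀}. -/

import Mathlib

noncomputable section

open MeasureTheory Complex Filter Topology

/-- `ℝ^n` as a Euclidean space. -/
abbrev Rn (n : ℕ) := EuclideanSpace ℝ (Fin n)

/-- The phase space `ℝ^n × ℝ^n`. -/
abbrev Ph (n : ℕ) := Rn n × Rn n

/-- `ℂ^q`. -/
abbrev Cq (q : ℕ) := EuclideanSpace ℂ (Fin q)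

/-- `B(ℂ^q)`, the `q × q` complex matrices as operators. -/
abbrev Mq (q : ℕ) := Cq q →L[ℂ] Cq q

/-- The Euclidean norm `|(x,ξ)|` on the phase space `ℝ^{2n}`. -/
def phNorm {n : ℕ} (w : Ph n) : ℝ := Real.sqrt (‖w.1‖ ^ 2 + ‖w.2‖ ^ 2)

/-- A smooth strictly positive function `⟨·⟩` on `ℝ^{2n}` which coincides with the
Euclidean norm outside the unit ball. -/
def IsBracket {n : ℕ} (jb : Ph n → ℝ) : Prop :=
  ContDiff ℝ (⊤ : ℕ∞) jb ∧ (∀ w, 0 < jb w) ∧ ∀ w : Ph n, 1 ≤ phNorm w → jb w = phNorm w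

section Symbols

variable {n : ℕ} {V : Type*} [NormedAddCommGroup V] [NormedSpace ℂ V]

/-- The Shubin class `Γ^m(ℝ^n, V)`:  all mixed derivatives of total order `k` are
`O(⟨(x,ξ)⟩^(Re m - k))`. -/
def ShubinSym (n : ℕ) (jb : Ph n → ℝ) (m : ℂ) : Set (Ph n → V) :=
  {a | ContDiff ℝ (⊤ : ℕ∞) a ∧
    ∀ k : ℕ, ∃ C : ℝ, ∀ w : Ph n, ‖iteratedFDeriv ℝ k a w‖ ≤ C * jb w ^ (m.re - k)}

/-- The regularizing symbols `Γ^{-∞} = ⋂ m, Γ^m`. -/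
def SmoothingSym (n : ℕ) (jb : Ph n → ℝ) : Set (Ph n → V) :=
  ⋂ m : ℂ, ShubinSym n jb m

/-- Positive homogeneity of (complex) degree `μ` away from the origin. -/
def IsHom (n : ℕ) (μ : ℂ) (f : Ph n → V) : Prop :=
  ∀ t : ℝ, 0 < t → ∀ w : Ph n, w ≠ 0 → f (t • w) = ((t : ℂ) ^ μ) • f w

/-- A zero excision function:  smooth, `[0,1]`-valued, vanishing near `0` and
equal to `1` outside a compact set. -/
def IsCutoff (n : ℕ) (χ : Ph n → ℝ) : Prop :=
  ContDiff ℝ (⊤ : ℕ∞) χ ∧ (∀ w, 0 ≤ χ w ∧ χ w ≤ 1) ∧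
    (∃ δ : ℝ, 0 < δ ∧ ∀ w : Ph n, phNorm w < δ → χ w = 0) ∧
    (∃ R : ℝ, ∀ w : Ph n, R ≤ phNorm w → χ w = 1)

/-- `a` is a classical Shubin symbol of order `m` with asymptotic expansion `t`:
each `t j` is smooth away from `0` and positively homogeneous of degree `m - j`, and
for every zero excision function `χ` and every `N`, `a - ∑_{j<N} χ • t j ∈ Γ^{m-N}`.
`t 0` is the principal symbol. -/
def IsClassicalWith (n : ℕ) (jb : Ph n → ℝ) (m : ℂ) (a : Ph n → V) (t : ℕ → Ph n → V) : Prop :=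
  a ∈ ShubinSym n jb m ∧
    (∀ j : ℕ, ContDiffOn ℝ (⊤ : ℕ∞) (t j) {w : Ph n | w ≠ 0} ∧ IsHom n (m - j) (t j)) ∧
    ∀ χ : Ph n → ℝ, IsCutoff n χ → ∀ N : ℕ,
      (fun w => a w - ∑ j ∈ Finset.range N, χ w • t j w) ∈ ShubinSym n jb (m - N)

/-- Membership in the class of classical symbols `Γ_cl^m`. -/
def IsClassical (n : ℕ) (jb : Ph n → ℝ) (m : ℂ) (a : Ph n → V) : Prop :=
  ∃ t : ℕ → Ph n → V, IsClassicalWith n jb m a t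

end Symbols

section Quantization

variable {n q : ℕ}

/-- The Fourier transform `û(ξ) = ∫ e^{-i x·ξ} u(x) dx`. -/
def fourierInt {W : Type*} [NormedAddCommGroup W] [NormedSpace ℂ W] [CompleteSpace W]
    (n : ℕ) (u : Rn n → W) (ξ : Rn n) : W :=
  ∫ x : Rn n, Complex.exp (-(Complex.I * ((inner ℝ x ξ : ℝ) : ℂ))) • u x

/-- The quantization `op(a)` of a matrix-valued symbol, acting on (vectors of)
Schwartz functions:  `op(a)u(x) = (2π)^{-n} ∫ e^{i x·ξ} a(x,ξ) û(ξ) dξ`. -/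
def opCl (n q : ℕ) (a : Ph n → Mq q) (u : SchwartzMap (Rn n) (Cq q)) (x : Rn n) : Cq q :=
  (((2 * Real.pi) ^ n)⁻¹ : ℝ) •
    ∫ ξ : Rn n, Complex.exp (Complex.I * ((inner ℝ x ξ : ℝ) : ℂ)) • (a (x, ξ)) (fourierInt n (fun y => u y) ξ)

/-- The quantization `op(a)` of a scalar symbol. -/
def opScalar (n : ℕ) (a : Ph n → ℂ) (u : SchwartzMap (Rn n) ℂ) (x : Rn n) : ℂ :=
  (((2 * Real.pi) ^ n)⁻¹ : ℝ) •
    ∫ ξ : Rn n, Complex.exp (Complex.I * ((inner ℝ x ξ : ℝ) : ℂ)) * (a (x, ξ) * fourierInt n (fun y => u y) ξ)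

/-- `L²(ℝ^n)`. -/
abbrev L2 (n : ℕ) := Lp ℂ 2 (volume : Measure (Rn n))

/-- `L²(ℝ^n)^{⊕q}`. -/
abbrev L2q (n q : ℕ) := Lp (Cq q) 2 (volume : Measure (Rn n))

/-- `A ∈ B(L²(ℝ^n))` is the (unique) bounded extension of `op(a)`. -/
def ExtendsOpScalar (n : ℕ) (a : Ph n → ℂ) (A : L2 n →L[ℂ] L2 n) : Prop :=
  ∀ u : SchwartzMap (Rn n) ℂ, ∀ f : L2 n, (⇑f =ᵐ[volume] ⇑u) → ⇑(A f) =ᵐ[volume] opScalar n a u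

/-- `A ∈ B(L²(ℝ^n)^{⊕q})` is the (unique) bounded extension of `op(a)`. -/
def ExtendsOpCl (n q : ℕ) (a : Ph n → Mq q) (A : L2q n q →L[ℂ] L2q n q) : Prop :=
  ∀ u : SchwartzMap (Rn n) (Cq q), ∀ f : L2q n q, (⇑f =ᵐ[volume] ⇑u) → ⇑(A f) =ᵐ[volume] opCl n q a u

end Quantization
/-- Integration over the unit sphere `S^{2n-1}` of the phase space, expressed through the
solid-ball parametrization: `∫_{S^{2n-1}} g dσ = 2n ∫_{|w| ≤ 1} g(w/|w|) dw`. -/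
def sphereIntS (n : ℕ) (g : Ph n → ℂ) : ℂ :=
  (2 * n : ℂ) * ∫ w in {w : Ph n | phNorm w ≤ 1}, g ((phNorm w)⁻¹ • w)

/-- The matrix trace on `B(ℂ^q)`. -/
def matTr {q : ℕ} (M : Mq q) : ℂ := LinearMap.trace ℂ (Cq q) (M : Cq q →ₗ[ℂ] Cq q)

/-- The Wodzicki residue of a scalar classical symbol of integer order `m` with asymptotic
expansion `t`:  `(2π)^{-n} ∫_{S^{2n-1}} a_{(-2n)} dσ`, where `a_{(-2n)} = t (m + 2n)` is the
homogeneous term of degree `-2n` (zero if the expansion has no such term). -/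
def WResS (n : ℕ) (m : ℤ) (t : ℕ → Ph n → ℂ) : ℂ :=
  if 0 ≤ m + 2 * n then (((2 * Real.pi) ^ n)⁻¹ : ℂ) * sphereIntS n (t (m + 2 * n).toNat) else 0

/-- The Wodzicki residue of a matrix-valued classical symbol of integer order `m` with
asymptotic expansion `t`:  `(2π)^{-n} ∫_{S^{2n-1}} Tr(a_{(-2n)}) dσ`. -/
def WResM (n q : ℕ) (m : ℤ) (t : ℕ → Ph n → Mq q) : ℂ :=
  if 0 ≤ m + 2 * n then
    (((2 * Real.pi) ^ n)⁻¹ : ℂ) * sphereIntS n (fun w => matTr (t (m + 2 * n).toNat w)) else 0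
/-- The Kontsevich–Vishik functional ("finite part integral") of a scalar classical Shubin
symbol `a` of order `z ∉ {-2n + j : j ∈ ℕ}` with asymptotic expansion `t`, computed with a
zero excision function `χ` and any `p` with `Re z - p < -2n`:
`TR(a) = (2π)^{-n} [ ∫_{|w|≤1} a - ∑_{j<p} (2n+z-j)⁻¹ ∫_{S^{2n-1}} a_{(z-j)} dσ
          + ∫_{|w|≥1} (a - ∑_{j<p} χ a_{(z-j)}) ]`. -/
def TRval (n : ℕ) (z : ℂ) (a : Ph n → ℂ) (t : ℕ → Ph n → ℂ) (χ : Ph n → ℝ) (p : ℕ) : ℂ :=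
  (((2 * Real.pi) ^ n)⁻¹ : ℂ) *
    ((∫ w in {w : Ph n | phNorm w ≤ 1}, a w) -
      (∑ j ∈ Finset.range p, ((2 * n : ℂ) + z - (j : ℂ))⁻¹ * sphereIntS n (t j)) +
      ∫ w in {w : Ph n | 1 ≤ phNorm w}, (a w - ∑ j ∈ Finset.range p, χ w • t j w))
/-- A holomorphic family `{b^z : z ∈ Ω}` of scalar classical Shubin symbols with analytic
order function `τ` and homogeneous terms `t z j` of degree `τ(z) - j`:  each `b^z` is
classical with expansion `t z`, the homogeneous terms are smooth in `((x,ξ), z)` and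
holomorphic in `z`, and the remainders `b^z - ∑_{j<N} χ t z j` are `Γ^{τ(z₀)-N+ε}`-valued
holomorphic functions of `z` near each `z₀ ∈ Ω` (locally uniform symbol estimates together
with pointwise holomorphy). -/
def IsHoloFamily (n : ℕ) (jb : Ph n → ℝ) (Ω : Set ℂ) (τ : ℂ → ℂ)
    (b : ℂ → Ph n → ℂ) (t : ℂ → ℕ → Ph n → ℂ) : Prop :=
  IsOpen Ω ∧ DifferentiableOn ℂ τ Ω ∧
    (∀ z ∈ Ω, IsClassicalWith n jb (τ z) (b z) (t z)) ∧
    (∀ j : ℕ, ContDiffOn ℝ (⊤ : ℕ∞) (fun p : Ph n × ℂ => t p.2 j p.1)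
      ({w : Ph n | w ≠ 0} ×ˢ Ω)) ∧
    (∀ j : ℕ, ∀ w : Ph n, w ≠ 0 → DifferentiableOn ℂ (fun z => t z j w) Ω) ∧
    ∀ z₀ ∈ Ω, ∀ N : ℕ, ∀ ε : ℝ, 0 < ε → ∃ V ∈ 𝓝 z₀, V ⊆ Ω ∧
      (∀ z ∈ V, (τ z).re < (τ z₀).re + ε) ∧
      ∀ χ : Ph n → ℝ, IsCutoff n χ →
        (∃ C : ℕ → ℝ, ∀ z ∈ V, ∀ k : ℕ, ∀ w : Ph n,
          ‖iteratedFDeriv ℝ k (fun w' => b z w' - ∑ j ∈ Finset.range N, χ w' • t z j w') w‖ ≤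
            C k * jb w ^ ((τ z₀).re - N + ε - k)) ∧
        ∀ w : Ph n, DifferentiableOn ℂ
          (fun z => b z w - ∑ j ∈ Finset.range N, χ w • t z j w) V

section Aux
open Metric


lemma phNorm_nonneg {n : ℕ} (w : Ph n) : 0 ≤ phNorm w := Real.sqrt_nonneg _

lemma phNorm_zero {n : ℕ} : phNorm (0 : Ph n) = 0 := by simp [phNorm]

lemma norm_le_phNorm {n : ℕ} (w : Ph n) : ‖w‖ ≤ phNorm w := by
  rw [Prod.norm_def]
  apply max_le
  · rw [phNorm, Real.le_sqrt (norm_nonneg _) (by positivity)]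
    nlinarith [sq_nonneg ‖w.2‖]
  · rw [phNorm, Real.le_sqrt (norm_nonneg _) (by positivity)]
    nlinarith [sq_nonneg ‖w.1‖]

lemma phNorm_pos {n : ℕ} {w : Ph n} (hw : w ≠ 0) : 0 < phNorm w :=
  lt_of_lt_of_le (norm_pos_iff.2 hw) (norm_le_phNorm w)

lemma phNorm_smul {n : ℕ} (c : ℝ) (hc : 0 ≤ c) (w : Ph n) :
    phNorm (c • w) = c * phNorm w := by
  rw [phNorm, phNorm]
  have h1 : ‖(c • w).1‖ = c * ‖w.1‖ := by
    rw [Prod.smul_fst, norm_smul, Real.norm_eq_abs, _root_.abs_of_nonneg hc]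
  have h2 : ‖(c • w).2‖ = c * ‖w.2‖ := by
    rw [Prod.smul_snd, norm_smul, Real.norm_eq_abs, _root_.abs_of_nonneg hc]
  rw [h1, h2]
  rw [mul_pow, mul_pow, ← mul_add, Real.sqrt_mul (by positivity), Real.sqrt_sq hc]

lemma continuous_phNorm {n : ℕ} : Continuous (phNorm (n := n)) := by
  apply Real.continuous_sqrt.comp
  exact ((continuous_fst.norm.pow 2).add (continuous_snd.norm.pow 2))

lemma isCompact_phBall {n : ℕ} : IsCompact {w : Ph n | phNorm w ≤ 1} := by
  apply (isCompact_closedBall (0 : Ph n) 1).of_isClosed_subset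
  · exact isClosed_le continuous_phNorm continuous_const
  · intro w hw
    simp only [Set.mem_setOf_eq] at hw
    simpa [dist_eq_norm] using le_trans (norm_le_phNorm w) hw

lemma isCompact_phSphere {n : ℕ} : IsCompact {w : Ph n | phNorm w = 1} := by
  apply (isCompact_closedBall (0 : Ph n) 1).of_isClosed_subset
  · exact isClosed_eq continuous_phNorm continuous_const
  · intro w hw
    simp only [Set.mem_setOf_eq] at hw
    simpa [dist_eq_norm] using le_trans (norm_le_phNorm w) hw.le

lemma phNorm_proj {n : ℕ} {w : Ph n} (hw : w ≠ 0) :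
    phNorm ((phNorm w)⁻¹ • w) = 1 := by
  rw [phNorm_smul _ (inv_nonneg.2 (phNorm_nonneg w)), inv_mul_cancel₀ (phNorm_pos hw).ne']

lemma proj_ne_zero {n : ℕ} {w : Ph n} (hw : w ≠ 0) : (phNorm w)⁻¹ • w ≠ 0 := by
  intro h
  have := phNorm_proj hw
  rw [h, phNorm_zero] at this
  norm_num at this

instance volumeAddHaar_Ph (n : ℕ) : (volume : MeasureTheory.Measure (Ph n)).IsAddHaarMeasure :=
  MeasureTheory.Measure.prod.instIsAddHaarMeasure _ _

lemma finrank_Ph (n : ℕ) : Module.finrank ℝ (Ph n) = 2 * n := by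
  rw [Module.finrank_prod, finrank_euclideanSpace_fin]; ring

-- integrability of (1+‖w‖)/2-type bounds
lemma integrable_phBound {n : ℕ} {s : ℝ} (hs : s < -(2 * n : ℝ)) :
    Integrable (fun w : Ph n => ((1 + ‖w‖) / 2) ^ s) := by
  have h1 : Integrable (fun w : Ph n => (1 + ‖w‖) ^ (-(-s))) := by
    apply integrable_one_add_norm
    rw [finrank_Ph]
    push_cast
    linarith
  have h2 := h1.div_const ((2 : ℝ) ^ s)
  apply h2.congr
  apply Eventually.of_forall
  intro w
  show (1 + ‖w‖) ^ (-(-s)) / 2 ^ s = ((1 + ‖w‖) / 2) ^ s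
  rw [neg_neg, Real.div_rpow (by positivity) (by norm_num)]



lemma holoParamIntegral {α : Type*} [MeasurableSpace α] {μ : MeasureTheory.Measure α}
    {F : ℂ → α → ℂ} {c : ℂ} {R : ℝ} {g : α → ℝ}
    (hg : MeasureTheory.Integrable g μ)
    (hmeas : ∀ z ∈ ball c R, MeasureTheory.AEStronglyMeasurable (F z) μ)
    (hbd : ∀ᵐ a ∂μ, ∀ z ∈ ball c R, ‖F z a‖ ≤ g a)
    (hholo : ∀ᵐ a ∂μ, DifferentiableOn ℂ (fun z => F z a) (ball c R)) :
    DifferentiableOn ℂ (fun z => ∫ a, F z a ∂μ) (ball c R) := by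
  intro z₁ hz₁
  have hz₁' : dist z₁ c < R := mem_ball.1 hz₁
  set r : ℝ := (R - dist z₁ c) / 3 with hrdef
  have hr : 0 < r := by
    have := dist_nonneg (x := z₁) (y := c)
    rw [hrdef]; linarith
  have key : ∀ x ∈ ball z₁ r, closedBall x r ⊆ ball c R := by
    intro x hx y hy
    have h1 : dist y x ≤ r := mem_closedBall.1 hy
    have h2 : dist x z₁ < r := mem_ball.1 hx
    have h4 : dist y c ≤ dist y x + dist x z₁ + dist z₁ c := dist_triangle4 y x z₁ c
    have h5 : dist z₁ c = R - 3 * r := by rw [hrdef]; ring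
    have : dist y c < R := by linarith
    exact mem_ball.2 this
  have hball : ball z₁ r ⊆ ball c R := fun x hx =>
    key x hx (mem_closedBall_self hr.le)
  -- the sequence for measurability of the derivative
  set u : ℕ → ℝ := fun m => min (r / 2) (1 / (m + 1)) with hudef
  have hu_pos : ∀ m, 0 < u m := fun m => lt_min (by linarith) (by positivity)
  have hu_le : ∀ m, u m ≤ r / 2 := fun m => min_le_left _ _
  have hu_mem : ∀ m, z₁ + (u m : ℂ) ∈ ball c R := by
    intro m
    apply hball
    have : dist (z₁ + (u m : ℂ)) z₁ = |u m| := by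
      simp [dist_eq_norm, Complex.norm_real]
    rw [mem_ball, this, abs_of_pos (hu_pos m)]
    linarith [hu_le m, hr]
  have hu_tendsto : Tendsto u atTop (𝓝 0) := by
    have h2 : Tendsto (fun m : ℕ => 1 / ((m : ℝ) + 1)) atTop (𝓝 0) :=
      tendsto_one_div_add_atTop_nhds_zero_nat
    have := (tendsto_const_nhds (x := r / 2) (f := atTop (α := ℕ))).min h2
    rwa [min_eq_right (by linarith)] at this
  have hu_tendstoC : Tendsto (fun m => z₁ + (u m : ℂ)) atTop (𝓝[≠] z₁) := by
    rw [tendsto_nhdsWithin_iff]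
    constructor
    · have : Tendsto (fun m => (u m : ℂ)) atTop (𝓝 0) := by
        exact (Complex.continuous_ofReal.tendsto 0).comp hu_tendsto
      simpa using tendsto_const_nhds.add this
    · exact Eventually.of_forall fun m => by
        simp only [Set.mem_compl_iff, Set.mem_singleton_iff]
        intro h
        have : (u m : ℂ) = 0 := by linear_combination h
        exact_mod_cast (hu_pos m).ne' (by exact_mod_cast this)
  -- apply the dominated-derivative theorem
  have H := hasDerivAt_integral_of_dominated_loc_of_deriv_le
    (μ := μ) (F := F) (F' := fun x a => deriv (fun z => F z a) x) (x₀ := z₁)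
    (bound := fun a => g a / r) (Metric.ball_mem_nhds z₁ hr)
    ((isOpen_ball.eventually_mem hz₁).mono fun x hx => hmeas x hx)
    (hg.mono' (hmeas z₁ hz₁) (hbd.mono fun a ha => ha z₁ hz₁))
    (by
      -- measurability of the derivative
      apply aestronglyMeasurable_of_tendsto_ae (u := atTop)
        (f := fun m a => (F (z₁ + (u m : ℂ)) a - F z₁ a) * (((z₁ + (u m : ℂ)) - z₁)⁻¹))
      · intro m
        exact ((hmeas _ (hu_mem m)).sub (hmeas z₁ hz₁)).mul_const _
      · filter_upwards [hholo] with a ha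
        have hd : HasDerivAt (fun z => F z a) (deriv (fun z => F z a) z₁) z₁ :=
          (ha.differentiableAt (isOpen_ball.mem_nhds hz₁)).hasDerivAt
        have := (hasDerivAt_iff_tendsto_slope.1 hd).comp hu_tendstoC
        convert this using 2 with m
        rw [Function.comp_apply, slope_def_field, div_eq_mul_inv])
    (by
      filter_upwards [hbd, hholo] with a ha hd
      intro x hx
      have hsub : closedBall x r ⊆ ball c R := key x hx
      have hdc : DiffContOnCl ℂ (fun z => F z a) (ball x r) := by
        apply DifferentiableOn.diffContOnCl
        rw [closure_ball x hr.ne']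
        exact hd.mono hsub
      exact Complex.norm_deriv_le_of_forall_mem_sphere_norm_le hr hdc fun z hz =>
        ha z (hsub (sphere_subset_closedBall hz)))
    (hg.div_const r)
    (by
      filter_upwards [hholo] with a ha
      intro x hx
      exact (ha.differentiableAt (isOpen_ball.mem_nhds (hball hx))).hasDerivAt)
  exact H.2.differentiableAt.differentiableWithinAt

end Aux

/-- For a holomorphic family `{b^z : z ∈ Ω}` of scalar classical Shubin
symbols with order function `τ`, the map `z ↦ TR(b^z)` is holomorphic on
`Ω ∖ {z : τ(z) = -2n + j, j ∈ ℕ₀}`  (locally, computed with any zero excision function `χ`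
and any admissible `p`). -/
theorem statement10 (n : ℕ) (hn : 0 < n) (jb : Ph n → ℝ) (hjb : IsBracket jb)
    (Ω : Set ℂ) (τ : ℂ → ℂ) (b : ℂ → Ph n → ℂ) (t : ℂ → ℕ → Ph n → ℂ)
    (hfam : IsHoloFamily n jb Ω τ b t) :
    ∀ z₀ ∈ Ω, (¬ ∃ j : ℕ, τ z₀ = -(2 * n : ℂ) + j) →
      ∀ χ : Ph n → ℝ, IsCutoff n χ → ∀ p : ℕ, (τ z₀).re - p < -(2 * n : ℝ) →
        ∃ V ∈ 𝓝 z₀, V ⊆ Ω ∧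
          DifferentiableOn ℂ (fun z => TRval n (τ z) (b z) (t z) χ p) V := by
  obtain ⟨hΩ, hτ, hcl, htj, htz, hrem⟩ := hfam
  intro z₀ hz₀ hτne χ hχ p hp
  obtain ⟨V₀, hV₀n, hV₀Ω, -, hV₀χ⟩ := hrem z₀ hz₀ 0 1 one_pos
  obtain ⟨⟨C₀, hbd₀⟩, hholo₀⟩ := hV₀χ χ hχ
  set ε : ℝ := (-(2 * n : ℝ) - ((τ z₀).re - p)) / 2 with hεdef
  have hεpos : 0 < ε := by rw [hεdef]; linarith
  obtain ⟨Vp, hVpn, hVpΩ, -, hVpχ⟩ := hrem z₀ hz₀ p ε hεpos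
  obtain ⟨⟨Cp, hbdp⟩, hholop⟩ := hVpχ χ hχ
  have hτct : ContinuousAt τ z₀ := ((hτ.differentiableAt (hΩ.mem_nhds hz₀)).continuousAt)
  have hne : ∀ᶠ z in 𝓝 z₀, ∀ j ∈ Finset.range p, (2 * n : ℂ) + τ z - j ≠ 0 := by
    rw [eventually_all_finset]
    intro j hj
    have h0 : (2 * n : ℂ) + τ z₀ - j ≠ 0 := by
      intro h
      exact hτne ⟨j, by linear_combination h⟩
    exact ((continuousAt_const.add hτct).sub continuousAt_const).eventually_ne h0
  obtain ⟨Rc, hRc, hRcΩ⟩ := Metric.nhds_basis_closedBall.mem_iff.1 (hΩ.mem_nhds hz₀)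
  have hT : V₀ ∩ Vp ∩ {z | ∀ j ∈ Finset.range p, (2 * n : ℂ) + τ z - j ≠ 0} ∩
      Metric.closedBall z₀ Rc ∈ 𝓝 z₀ :=
    Filter.inter_mem (Filter.inter_mem (Filter.inter_mem hV₀n hVpn) hne)
      (Metric.closedBall_mem_nhds _ hRc)
  obtain ⟨R, hR, hRsub⟩ := Metric.mem_nhds_iff.1 hT
  have hVV₀ : Metric.ball z₀ R ⊆ V₀ := fun z hz => (hRsub hz).1.1.1
  have hVVp : Metric.ball z₀ R ⊆ Vp := fun z hz => (hRsub hz).1.1.2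
  have hVne : ∀ z ∈ Metric.ball z₀ R, ∀ j ∈ Finset.range p, (2 * n : ℂ) + τ z - j ≠ 0 :=
    fun z hz => (hRsub hz).1.2
  have hVcb : Metric.ball z₀ R ⊆ Metric.closedBall z₀ Rc := fun z hz => (hRsub hz).2
  have hVΩ : Metric.ball z₀ R ⊆ Ω := fun z hz => hRcΩ (hVcb hz)
  refine ⟨Metric.ball z₀ R, Metric.ball_mem_nhds z₀ hR, hVΩ, ?_⟩
  have hjbc : Continuous jb := hjb.1.continuous
  have hjbpos := hjb.2.1
  have hjbsp := hjb.2.2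
  set S : Set (Ph n) := {w | phNorm w ≤ 1} with hSdef
  set S1 : Set (Ph n) := {w | 1 ≤ phNorm w} with hS1def
  have hSmeas : MeasurableSet S := (isClosed_le continuous_phNorm continuous_const).measurableSet
  have hS1meas : MeasurableSet S1 :=
    (isClosed_le continuous_const continuous_phNorm).measurableSet
  have hS10 : ∀ w ∈ S1, w ≠ 0 := by
    intro w hw h0
    rw [h0] at hw
    simp only [hS1def, Set.mem_setOf_eq, phNorm_zero] at hw
    norm_num at hw
  -- Part A1 : the integral over the unit ball
  have hbz : ∀ z ∈ Metric.ball z₀ R, ∀ w, ‖b z w‖ ≤ C₀ 0 * jb w ^ ((τ z₀).re + 1) := by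
    intro z hz w
    have h := hbd₀ z (hVV₀ hz) 0 w
    simp only [Finset.sum_range_zero, sub_zero, norm_iteratedFDeriv_zero,
      Nat.cast_zero] at h
    exact h
  have hA1 : DifferentiableOn ℂ (fun z => ∫ w in S, b z w) (Metric.ball z₀ R) := by
    apply holoParamIntegral (g := fun w => C₀ 0 * jb w ^ ((τ z₀).re + 1))
    · exact ContinuousOn.integrableOn_compact isCompact_phBall
        ((continuous_const.mul
          (hjbc.rpow_const fun w => Or.inl (hjbpos w).ne')).continuousOn)
    · intro z hz
      exact ((hcl z (hVΩ hz)).1.1.continuous.aestronglyMeasurable).restrict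
    · exact Eventually.of_forall fun w z hz => hbz z hz w
    · apply Eventually.of_forall
      intro w
      have h := hholo₀ w
      simp only [Finset.sum_range_zero, sub_zero] at h
      exact h.mono hVV₀
  -- Part A3 : the integral over the exterior region
  set s₂ : ℝ := (τ z₀).re - p + ε with hs₂def
  have hs₂ : s₂ < -(2 * n : ℝ) := by rw [hs₂def, hεdef]; linarith
  have hs₂0 : s₂ ≤ 0 := by
    have h2n : (0:ℝ) ≤ 2 * n := by positivity
    linarith
  have hrem2 : ∀ z ∈ Metric.ball z₀ R, ∀ w,
      ‖b z w - ∑ j ∈ Finset.range p, χ w • t z j w‖ ≤ Cp 0 * jb w ^ s₂ := by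
    intro z hz w
    have h := hbdp z (hVVp hz) 0 w
    simp only [norm_iteratedFDeriv_zero, Nat.cast_zero, sub_zero] at h
    exact h
  have hint2 : IntegrableOn (fun w => Cp 0 * jb w ^ s₂) S1 := by
    have hInt := (integrable_phBound (n := n) hs₂).restrict (s := S1)
    apply Integrable.mono' (hInt.const_mul |Cp 0|)
    · exact ((continuous_const.mul
        (hjbc.rpow_const fun w => Or.inl (hjbpos w).ne')).aestronglyMeasurable).restrict
    · rw [ae_restrict_iff' hS1meas]
      apply Eventually.of_forall
      intro w hw
      have h1 : (1:ℝ) ≤ phNorm w := hw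
      have hjbw : jb w = phNorm w := hjbsp w h1
      have hb : (1 + ‖w‖) / 2 ≤ phNorm w := by
        have := norm_le_phNorm w; linarith
      have h2 : phNorm w ^ s₂ ≤ ((1 + ‖w‖) / 2) ^ s₂ :=
        Real.rpow_le_rpow_of_nonpos (by positivity) hb hs₂0
      rw [Real.norm_eq_abs, abs_mul, hjbw,
        _root_.abs_of_nonneg (Real.rpow_nonneg (phNorm_nonneg w) _)]
      exact mul_le_mul_of_nonneg_left h2 (abs_nonneg _)
  have hremcont : ∀ z ∈ Metric.ball z₀ R,
      ContinuousOn (fun w => b z w - ∑ j ∈ Finset.range p, χ w • t z j w) S1 := by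
    intro z hz
    apply ContinuousOn.sub
    · exact (hcl z (hVΩ hz)).1.1.continuous.continuousOn
    · apply ContinuousOn.mono (s := {w : Ph n | w ≠ 0}) ?_ (fun w hw => hS10 w hw)
      apply continuousOn_finset_sum
      intro j hj
      exact (hχ.1.continuous.continuousOn).smul (((hcl z (hVΩ hz)).2.1 j).1.continuousOn)
  have hA3 : DifferentiableOn ℂ
      (fun z => ∫ w in S1, (b z w - ∑ j ∈ Finset.range p, χ w • t z j w))
      (Metric.ball z₀ R) := by
    apply holoParamIntegral (g := fun w => Cp 0 * jb w ^ s₂) hint2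
    · intro z hz
      exact (hremcont z hz).aestronglyMeasurable hS1meas
    · exact Eventually.of_forall fun w z hz => hrem2 z hz w
    · exact Eventually.of_forall fun w => (hholop w).mono hVVp
  -- Part A2 : the sphere integrals
  have hS'meas : MeasurableSet (S \ {0}) := hSmeas.diff (measurableSet_singleton 0)
  have hS0 : (volume : Measure (Ph n)) {(0 : Ph n)} = 0 := by
    have hsingl : ({(0 : Ph n)} : Set (Ph n)) = ({0} : Set (Rn n)) ×ˢ ({0} : Set (Rn n)) := by
      rw [Set.singleton_prod_singleton]; rfl
    haveI : Nontrivial (Rn n) := by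
      apply Module.nontrivial_of_finrank_pos (R := ℝ)
      rw [finrank_euclideanSpace_fin]
      exact hn
    rw [hsingl, show (volume : Measure (Ph n)) = (volume : Measure (Rn n)).prod volume from rfl,
      Measure.prod_prod, measure_singleton, zero_mul]
  have hmeq : (volume : Measure (Ph n)).restrict S = volume.restrict (S \ {0}) := by
    apply Measure.restrict_congr_set
    rw [MeasureTheory.ae_eq_set]
    constructor
    · apply measure_mono_null _ hS0
      intro w hw
      rcases hw with ⟨hwS, hw2⟩
      by_contra h
      exact hw2 ⟨hwS, h⟩
    · apply measure_mono_null _ hS0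
      intro w hw
      exact (hw.2 hw.1.1).elim
  have hA2 : ∀ j ∈ Finset.range p,
      DifferentiableOn ℂ (fun z => sphereIntS n (t z j)) (Metric.ball z₀ R) := by
    intro j hj
    have hKne : {w : Ph n | phNorm w = 1} ⊆ {w : Ph n | w ≠ 0} := by
      intro w hw h0
      rw [h0] at hw
      simp only [Set.mem_setOf_eq, phNorm_zero] at hw
      norm_num at hw
    obtain ⟨Cj, hCj⟩ :=
      (isCompact_phSphere.prod (isCompact_closedBall z₀ Rc)).exists_bound_of_continuousOn
        ((htj j).continuousOn.mono (Set.prod_mono hKne hRcΩ))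
    have hS'ne : ∀ w ∈ S \ {0}, w ≠ 0 := by
      intro w hw
      simpa using hw.2
    have heq : (fun z => sphereIntS n (t z j)) =
        (fun z => (2 * n : ℂ) * ∫ w in S \ {0}, t z j ((phNorm w)⁻¹ • w)) := by
      funext z
      rw [sphereIntS, ← hmeq]
    rw [heq]
    apply DifferentiableOn.const_mul
    apply holoParamIntegral (g := fun _ => Cj)
    · have hc : IntegrableOn (fun _ : Ph n => Cj) (S \ {0}) volume := by
        rw [integrableOn_const_iff]
        exact Or.inr (lt_of_le_of_lt (measure_mono Set.diff_subset)
          isCompact_phBall.measure_lt_top)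
      exact hc
    · intro z hz
      have hu : ContinuousOn (fun w : Ph n => (phNorm w)⁻¹ • w) {w : Ph n | w ≠ 0} :=
        (continuous_phNorm.continuousOn.inv₀ fun w hw => (phNorm_pos hw).ne').smul
          continuousOn_id
      have hcont : ContinuousOn (fun w : Ph n => t z j ((phNorm w)⁻¹ • w))
          {w : Ph n | w ≠ 0} :=
        ContinuousOn.comp (((hcl z (hVΩ hz)).2.1 j).1.continuousOn) hu
          fun w hw => proj_ne_zero hw
      exact (hcont.mono fun w hw => hS'ne w hw).aestronglyMeasurable hS'meas
    · rw [ae_restrict_iff' hS'meas]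
      apply Eventually.of_forall
      intro w hw z hz
      exact hCj ((phNorm w)⁻¹ • w, z) ⟨phNorm_proj (hS'ne w hw), hVcb hz⟩
    · rw [ae_restrict_iff' hS'meas]
      apply Eventually.of_forall
      intro w hw
      exact (htz j _ (proj_ne_zero (hS'ne w hw))).mono hVΩ
  -- Assemble
  have hTR : (fun z => TRval n (τ z) (b z) (t z) χ p) = fun z =>
      (((2 * Real.pi) ^ n)⁻¹ : ℂ) *
        ((∫ w in S, b z w) -
          (∑ j ∈ Finset.range p, ((2 * n : ℂ) + τ z - (j : ℂ))⁻¹ * sphereIntS n (t z j)) +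
          ∫ w in S1, (b z w - ∑ j ∈ Finset.range p, χ w • t z j w)) := rfl
  rw [hTR]
  apply DifferentiableOn.const_mul
  apply DifferentiableOn.add
  · apply DifferentiableOn.sub hA1
    apply DifferentiableOn.fun_sum
    intro j hj
    apply DifferentiableOn.mul
    · apply DifferentiableOn.inv
      · exact ((differentiableOn_const _).add (hτ.mono hVΩ)).sub (differentiableOn_const _)
      · exact fun z hz => hVne z hz j hj
    · exact hA2 j hj
  · exact hA3
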